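/- Let Ω be a compact metric space, T a homeomorphism of Ω, and A: Ω → GL(2,ℂ) continuous with |det A(ω)| = 1 for all ω. If (T,A) admits no Sacker–Sell solution, then there exist N ∈ ℤ₊ and ε > 0 such that for every ω ∈ Ω and every unit vector v ∈ ℂ², there exists n with |n| ≤ N and ‖Aⁿ(ω)v‖ > 1 + ε. -/

import Mathlib

noncomputable section

abbrev E2 := EuclideanSpace ℂ (Fin 2)
abbrev M2 := Matrix (Fin 2) (Fin 2) ℂ

noncomputable def opNorm (M : M2) : ℝ :=
  ‖Matrix.toEuclideanCLM (𝕜 := ℂ) (n := Fin 2) M‖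

noncomputable def mulV (M : M2) (v : E2) : E2 :=
  Matrix.toEuclideanCLM (𝕜 := ℂ) (n := Fin 2) M v

variable {Ω : Type*} [MetricSpace Ω]

noncomputable def fwd (T : Ω ≃ₜ Ω) (A : Ω → M2) : ℕ → Ω → M2
  | 0, _ => 1
  | n + 1, ω => fwd T A n (T ω) * A ω

noncomputable def coc (T : Ω ≃ₜ Ω) (A : Ω → M2) (n : ℤ) (ω : Ω) : M2 :=
  if 0 ≤ n then fwd T A n.toNat ω
  else (fwd T A (-n).toNat ((⇑T.symm)^[(-n).toNat] ω))⁻¹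

lemma cont_toCLM : Continuous (fun M : M2 => (Matrix.toEuclideanCLM (𝕜 := ℂ) (n := Fin 2) M : E2 →L[ℂ] E2)) :=
  LinearMap.continuous_of_finiteDimensional
    { toFun := fun M => (Matrix.toEuclideanCLM (𝕜 := ℂ) (n := Fin 2) M : E2 →L[ℂ] E2)
      map_add' := map_add _
      map_smul' := map_smul _ }

lemma cont_mulV : Continuous (fun p : M2 × E2 => mulV p.1 p.2) :=
  (cont_toCLM.comp continuous_fst).clm_apply continuous_snd

lemma cont_fwd (T : Ω ≃ₜ Ω) (A : Ω → M2) (hA : Continuous A) :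
    ∀ n, Continuous (fun ω => fwd T A n ω) := by
  intro n
  induction n with
  | zero => exact continuous_const
  | succ k ih => exact (ih.comp T.continuous).matrix_mul hA

lemma isUnit_fwd (T : Ω ≃ₜ Ω) (A : Ω → M2) (hinv : ∀ ω, IsUnit (A ω)) :
    ∀ n ω, IsUnit (fwd T A n ω) := by
  intro n
  induction n with
  | zero => exact fun ω => isUnit_one
  | succ k ih => exact fun ω => (ih (T ω)).mul (hinv ω)

lemma cont_coc (T : Ω ≃ₜ Ω) (A : Ω → M2) (hA : Continuous A)
    (hinv : ∀ ω, IsUnit (A ω)) (n : ℤ) : Continuous (fun ω => coc T A n ω) := by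
  unfold coc
  by_cases h : 0 ≤ n
  · simp only [h, if_true]; exact cont_fwd T A hA _
  · simp only [h, if_false]
    rw [continuous_iff_continuousAt]
    intro ω
    have hg : Continuous (fun ω => fwd T A (-n).toNat ((⇑T.symm)^[(-n).toNat] ω)) :=
      (cont_fwd T A hA _).comp (T.symm.continuous.iterate _)
    have hu : IsUnit (fwd T A (-n).toNat ((⇑T.symm)^[(-n).toNat] ω)) :=
      isUnit_fwd T A hinv _ _
    have hd : IsUnit (fwd T A (-n).toNat ((⇑T.symm)^[(-n).toNat] ω)).det :=
      (Matrix.isUnit_iff_isUnit_det _).mp hu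
    have hinvc : ContinuousAt (fun M : M2 => M⁻¹)
        (fwd T A (-n).toNat ((⇑T.symm)^[(-n).toNat] ω)) :=
      continuousAt_matrix_inv _ (NormedRing.inverse_continuousAt hd.unit)
    have h1 : ContinuousAt ((⇑T.symm)^[(-n).toNat]) ω :=
      (T.symm.continuous.iterate _).continuousAt
    have h2 : ContinuousAt (fwd T A (-n).toNat) ((⇑T.symm)^[(-n).toNat] ω) :=
      (cont_fwd T A hA _).continuousAt
    exact (hinvc.comp h2).comp h1

/-- if the cocycle admits no Sacker–Sell solution, then there are
uniform `N` and `ε > 0` such that every unit vector is expanded by more than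
`1 + ε` within time window `|n| ≤ N`. -/
theorem no_SackerSell_uniform [CompactSpace Ω]
    (T : Ω ≃ₜ Ω) (A : Ω → M2) (hA : Continuous A)
    (hinv : ∀ ω, IsUnit (A ω)) (hdet : ∀ ω, ‖(A ω).det‖ = 1)
    (hnoss : ∀ (ω : Ω) (v : E2), ‖v‖ = 1 → ∃ n : ℤ, 1 < ‖mulV (coc T A n ω) v‖) :
    ∃ (N : ℕ) (ε : ℝ), 0 < N ∧ 0 < ε ∧
      ∀ (ω : Ω) (v : E2), ‖v‖ = 1 →
        ∃ n : ℤ, |n| ≤ (N : ℤ) ∧ 1 + ε < ‖mulV (coc T A n ω) v‖ := by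
  by_cases hΩ : Nonempty Ω
  case neg =>
    refine ⟨1, 1, one_pos, one_pos, fun ω => absurd ⟨ω⟩ hΩ⟩
  -- continuous norm functions
  set f : ℤ → Ω × E2 → ℝ := fun n p => ‖mulV (coc T A n p.1) p.2‖ with hf
  have hfc : ∀ n, Continuous (f n) := fun n =>
    (cont_mulV.comp (((cont_coc T A hA hinv n).comp continuous_fst).prodMk
      continuous_snd)).norm
  -- compact set
  set S : Set (Ω × E2) := Set.univ ×ˢ Metric.sphere 0 1 with hS
  have hScomp : IsCompact S := isCompact_univ.prod (isCompact_sphere 0 1)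
  have hcover : S ⊆ ⋃ n : ℤ, {p | 1 < f n p} := by
    rintro ⟨ω, v⟩ hp
    have hv : ‖v‖ = 1 := by
      simpa using hp.2
    obtain ⟨n, hn⟩ := hnoss ω v hv
    exact Set.mem_iUnion.mpr ⟨n, hn⟩
  obtain ⟨t, ht⟩ := hScomp.elim_finite_subcover (fun n : ℤ => {p | 1 < f n p})
    (fun n => isOpen_lt continuous_const (hfc n)) hcover
  set N : ℕ := (t.sup Int.natAbs) + 1 with hN
  have hNmem : ∀ n ∈ t, |n| ≤ (N : ℤ) := by
    intro n hn
    have := Finset.le_sup (f := Int.natAbs) hn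
    rw [Int.abs_eq_natAbs]
    exact_mod_cast le_trans this (Nat.le_succ _)
  -- sup function
  have hne : (Finset.Icc (-(N:ℤ)) N).Nonempty := by
    refine ⟨0, ?_⟩
    simp [Finset.mem_Icc]
  set g : Ω × E2 → ℝ := fun p => (Finset.Icc (-(N:ℤ)) N).sup' hne (fun n => f n p) with hg
  have hgc : Continuous g := by
    rw [continuous_iff_continuousAt]
    intro p
    exact ContinuousAt.finset_sup'_apply hne (fun n _ => (hfc n).continuousAt)
  have hg1 : ∀ p ∈ S, 1 < g p := by
    intro p hp
    obtain ⟨n, hnt, hnp⟩ := Set.mem_iUnion₂.mp (ht hp)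
    have hnIcc : n ∈ Finset.Icc (-(N:ℤ)) N := by
      have h2 := hNmem n hnt
      rw [abs_le] at h2
      rw [Finset.mem_Icc]
      exact h2
    exact lt_of_lt_of_le hnp (Finset.le_sup' (fun n => f n p) hnIcc)
  -- min on compact
  have hSne : S.Nonempty := by
    obtain ⟨ω⟩ := hΩ
    refine ⟨(ω, EuclideanSpace.single 0 1), Set.mem_univ _, ?_⟩
    simp [EuclideanSpace.norm_single]
  obtain ⟨p₀, hp₀S, hp₀min⟩ := hScomp.exists_isMinOn hSne hgc.continuousOn
  set m := g p₀ with hm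
  have hm1 : 1 < m := hg1 p₀ hp₀S
  refine ⟨N, (m - 1) / 2, Nat.succ_pos _, by linarith, ?_⟩
  intro ω v hv
  have hpS : (ω, v) ∈ S := ⟨Set.mem_univ _, by simp [hv]⟩
  obtain ⟨n, hnmem, hneq⟩ := Finset.exists_mem_eq_sup' hne (fun n => f n (ω, v))
  refine ⟨n, ?_, ?_⟩
  · rw [Finset.mem_Icc] at hnmem
    rw [abs_le]; exact hnmem
  · have hle : m ≤ f n (ω, v) := le_of_le_of_eq (hp₀min hpS) hneq
    simp only [f] at hle
    linarith

end
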